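/- The von Dyck group G₀(3,3,3), i.e. the presented group ⟨x, y, z ∣ x³ = y³ = z³ = xyz = 1⟩ (the quotient of the free group on three generators x, y, z by the normal closure of the relators x³, y³, z³, xyz), has Grossman's Property A. -/

import Mathlib

/-- A group `G` has Grossman's Property A if every class-preserving automorphism
(i.e. one sending each element to a conjugate of itself) is inner. -/
def HasPropertyA (G : Type*) [Group G] : Prop :=
  ∀ φ : G ≃* G, (∀ g : G, IsConj g (φ g)) → ∃ h : G, ∀ g : G, φ g = h * g * h⁻¹

/-- The relators of the von Dyck group `G₀(p,q,r) = ⟨x, y, z ∣ xᵖ = y^q = z^r = xyz = 1⟩`. -/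
def vonDyckRels (p q r : ℕ) : Set (FreeGroup (Fin 3)) :=
  {(FreeGroup.of 0) ^ p, (FreeGroup.of 1) ^ q, (FreeGroup.of 2) ^ r,
    FreeGroup.of 0 * FreeGroup.of 1 * FreeGroup.of 2}

namespace VD

lemma zmod3_cases (k : ZMod 3) : k = 0 ∨ k = 1 ∨ k = 2 := by revert k; decide

/-- rotation by a cube root of unity on the Eisenstein lattice ℤ². -/
def rot (k : ZMod 3) (v : ℤ × ℤ) : ℤ × ℤ :=
  if k = 0 then v else if k = 1 then (-v.2, v.1 - v.2) else (v.2 - v.1, -v.1)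

@[simp] lemma rot_zero (v : ℤ × ℤ) : rot 0 v = v := by simp [rot]

@[simp] lemma rot_zero_vec (k : ZMod 3) : rot k 0 = 0 := by
  rcases zmod3_cases k with rfl | rfl | rfl <;> simp +decide [rot]

lemma rot_one (v : ℤ × ℤ) : rot 1 v = (-v.2, v.1 - v.2) := by simp +decide [rot]

lemma rot_add (k : ZMod 3) (v w : ℤ × ℤ) : rot k (v + w) = rot k v + rot k w := by
  rcases zmod3_cases k with rfl | rfl | rfl <;> simp +decide [rot, Prod.ext_iff] <;>
    constructor <;> ring

lemma rot_rot (k l : ZMod 3) (v : ℤ × ℤ) : rot k (rot l v) = rot (k + l) v := by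
  rcases zmod3_cases k with rfl | rfl | rfl <;> rcases zmod3_cases l with rfl | rfl | rfl <;>
    simp +decide [rot, Prod.ext_iff] <;> ring_nf <;> constructor <;> ring

lemma rot_neg (k : ZMod 3) (v : ℤ × ℤ) : rot k (-v) = -(rot k v) := by
  rcases zmod3_cases k with rfl | rfl | rfl <;> simp +decide [rot, Prod.ext_iff] <;> ring_nf <;>
    constructor <;> ring

lemma rot_smul (k : ZMod 3) (n : ℤ) (v : ℤ × ℤ) : rot k (n • v) = n • rot k v := by
  rcases zmod3_cases k with rfl | rfl | rfl <;>
    simp +decide [rot, Prod.ext_iff, Prod.smul_fst, Prod.smul_snd, smul_eq_mul] <;> ring_nf <;>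
    try (constructor <;> ring)

/-- the group ℤ² ⋊ ℤ/3. -/
@[ext] structure M where
  v : ℤ × ℤ
  k : ZMod 3

instance : Mul M := ⟨fun a b => ⟨a.v + rot a.k b.v, a.k + b.k⟩⟩
instance : One M := ⟨⟨0, 0⟩⟩
instance : Inv M := ⟨fun a => ⟨-(rot (-a.k) a.v), -a.k⟩⟩

@[simp] lemma mul_v (a b : M) : (a * b).v = a.v + rot a.k b.v := rfl
@[simp] lemma mul_k (a b : M) : (a * b).k = a.k + b.k := rfl
@[simp] lemma one_v : (1 : M).v = 0 := rfl
@[simp] lemma one_k : (1 : M).k = 0 := rfl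
@[simp] lemma inv_v (a : M) : (a⁻¹).v = -(rot (-a.k) a.v) := rfl
@[simp] lemma inv_k (a : M) : (a⁻¹).k = -a.k := rfl

instance : Group M :=
  Group.ofLeftAxioms
    (fun a b c => by ext <;> simp [rot_add, rot_rot] <;> abel)
    (fun a => by ext <;> simp)
    (fun a => by ext <;> simp [rot_rot])

lemma conj_eq (c g : M) : c * g * c⁻¹ = ⟨c.v + rot c.k g.v - rot g.k c.v, g.k⟩ := by
  have h : c.k + g.k + -c.k = g.k := by ring
  ext <;> simp [rot_neg, rot_rot, h] <;> abel

end VD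

namespace VD

lemma T_pow (w : ℤ × ℤ) (n : ℕ) : (⟨w, 0⟩ : M) ^ n = ⟨n • w, 0⟩ := by
  induction n with
  | zero => ext <;> simp
  | succ n ih => rw [pow_succ, ih]; ext <;> simp [add_smul] <;> abel

lemma T_zpow (w : ℤ × ℤ) (n : ℤ) : (⟨w, 0⟩ : M) ^ n = ⟨n • w, 0⟩ := by
  cases n with
  | ofNat n => simpa using T_pow w n
  | negSucc n =>
      rw [zpow_negSucc, T_pow]
      ext <;> simp [Int.negSucc_eq, add_smul, neg_smul, Prod.smul_fst, Prod.smul_snd,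
        smul_eq_mul] <;> push_cast <;> ring

lemma X_pow (n : ℕ) : (⟨0, 1⟩ : M) ^ n = ⟨0, (n : ZMod 3)⟩ := by
  induction n with
  | zero => ext <;> simp
  | succ n ih => rw [pow_succ, ih]; ext <;> simp [rot_neg] <;> push_cast <;> ring

lemma decompose (g : M) : g = ⟨g.v, 0⟩ * (⟨0, 1⟩ : M) ^ (g.k.val) := by
  rw [X_pow]; ext <;> simp [ZMod.natCast_val, ZMod.cast_id]

lemma vec_decompose (v : ℤ × ℤ) : v = v.1 • ((1, 0) : ℤ × ℤ) + v.2 • ((0, 1) : ℤ × ℤ) := by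
  simp [Prod.ext_iff]

lemma rot_index_eq : ∀ j₁ j₂ : ZMod 3, rot (1 + j₁) (1, 0) = rot j₂ (0, 1) → j₁ = j₂ := by
  decide

lemma propertyA_M : HasPropertyA M := by
  intro φ hφ
  -- the translation part of φ: each translation is sent to a rotation of itself
  have key : ∀ v : ℤ × ℤ, ∃ j : ZMod 3, φ ⟨v, 0⟩ = ⟨rot j v, 0⟩ := by
    intro v
    obtain ⟨c, hc⟩ := isConj_iff.1 (hφ ⟨v, 0⟩)
    exact ⟨c.k, by rw [← hc, conj_eq]; ext <;> simp⟩
  obtain ⟨j₁, hj₁⟩ := key (1, 0)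
  obtain ⟨j₂, hj₂⟩ := key (0, 1)
  obtain ⟨c₀, hc₀⟩ := isConj_iff.1 (hφ ⟨0, 1⟩)
  have hXk : (φ (⟨0, 1⟩ : M)).k = 1 := by rw [← hc₀, conj_eq]
  have hrel : (⟨0,1⟩ : M) * ⟨(1,0),0⟩ * (⟨0,1⟩ : M)⁻¹ = ⟨(0,1),0⟩ := by
    rw [conj_eq]; ext <;> simp [rot_one]
  have hmul := congrArg φ hrel
  rw [map_mul, map_mul, map_inv, hj₁, hj₂, conj_eq, hXk] at hmul
  have hj12 : j₁ = j₂ := by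
    apply rot_index_eq j₁ j₂
    have := congrArg M.v hmul
    simpa [rot_rot] using this
  set j := j₁ with hj
  -- φ is rotation by j on all translations
  have hT : ∀ v : ℤ × ℤ, φ ⟨v, 0⟩ = ⟨rot j v, 0⟩ := by
    intro v
    have hdec : (⟨v, 0⟩ : M) = (⟨(1,0),0⟩ : M) ^ (v.1) * (⟨(0,1),0⟩ : M) ^ (v.2) := by
      rw [T_zpow, T_zpow]; ext <;> simp
    have hj₂' : φ ⟨(0,1),0⟩ = ⟨rot j (0,1), 0⟩ := by rw [hj₂, hj12]
    rw [hdec, map_mul, map_zpow, map_zpow, hj₁, hj₂', T_zpow, T_zpow]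
    ext <;> simp
    · nth_rewrite 3 [vec_decompose v]
      rw [rot_add, rot_smul, rot_smul]
      simp
    · nth_rewrite 3 [vec_decompose v]
      rw [rot_add, rot_smul, rot_smul]
      simp
  -- the image of the rotation generator
  obtain ⟨c, hc⟩ := isConj_iff.1 (hφ ⟨0, 1⟩)
  rw [conj_eq] at hc
  set w := c.v with hw
  -- the conjugating element
  refine ⟨⟨w, j⟩, fun g => ?_⟩
  have hXc : φ ⟨0, 1⟩ = (⟨w, j⟩ : M) * ⟨0, 1⟩ * (⟨w, j⟩ : M)⁻¹ := by
    rw [conj_eq, ← hc]; ext <;> simp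
  have hTc : ∀ v : ℤ × ℤ, φ ⟨v, 0⟩ = (⟨w, j⟩ : M) * ⟨v, 0⟩ * (⟨w, j⟩ : M)⁻¹ := by
    intro v
    rw [conj_eq, hT]; ext <;> simp
  calc φ g = φ (⟨g.v, 0⟩ * (⟨0, 1⟩ : M) ^ (g.k.val)) := by rw [← decompose]
    _ = φ ⟨g.v, 0⟩ * (φ ⟨0, 1⟩) ^ (g.k.val) := by rw [map_mul, map_pow]
    _ = (⟨w, j⟩ * ⟨g.v, 0⟩ * ⟨w, j⟩⁻¹) * (⟨w, j⟩ * ⟨0, 1⟩ * ⟨w, j⟩⁻¹) ^ (g.k.val) := by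
        rw [hTc, hXc]
    _ = ⟨w, j⟩ * (⟨g.v, 0⟩ * (⟨0, 1⟩ : M) ^ (g.k.val)) * ⟨w, j⟩⁻¹ := by
        rw [conj_pow]; group
    _ = ⟨w, j⟩ * g * ⟨w, j⟩⁻¹ := by rw [← decompose]

end VD

namespace VD

lemma rot_two (v : ℤ × ℤ) : rot 2 v = (v.2 - v.1, -v.1) := by simp +decide [rot]

abbrev P : Type := PresentedGroup (vonDyckRels 3 3 3)

def pa : P := PresentedGroup.of 0
def pb : P := PresentedGroup.of 1
def pz : P := PresentedGroup.of 2

lemma mk_rel {r : FreeGroup (Fin 3)} (h : r ∈ vonDyckRels 3 3 3) :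
    PresentedGroup.mk (vonDyckRels 3 3 3) r = 1 :=
  (QuotientGroup.eq_one_iff _).2 (Subgroup.subset_normalClosure h)

lemma pa3 : pa ^ 3 = 1 := by
  have h := mk_rel (show (FreeGroup.of 0) ^ 3 ∈ vonDyckRels 3 3 3 by simp [vonDyckRels])
  simpa [pa, PresentedGroup.of, map_pow] using h

lemma pb3 : pb ^ 3 = 1 := by
  have h := mk_rel (show (FreeGroup.of 1) ^ 3 ∈ vonDyckRels 3 3 3 by simp [vonDyckRels])
  simpa [pb, PresentedGroup.of, map_pow] using h

lemma pz3 : pz ^ 3 = 1 := by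
  have h := mk_rel (show (FreeGroup.of 2) ^ 3 ∈ vonDyckRels 3 3 3 by simp [vonDyckRels])
  simpa [pz, PresentedGroup.of, map_pow] using h

lemma habz : pa * pb * pz = 1 := by
  have h := mk_rel (show FreeGroup.of 0 * FreeGroup.of 1 * FreeGroup.of 2 ∈ vonDyckRels 3 3 3 by
    simp [vonDyckRels])
  simpa [pa, pb, pz, PresentedGroup.of, map_mul] using h

lemma haa : pa * pa * pa = 1 := by
  calc pa * pa * pa = pa ^ 3 := by rw [pow_succ, pow_two]
    _ = 1 := pa3

lemma hbb : pb * pb * pb = 1 := by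
  calc pb * pb * pb = pb ^ 3 := by rw [pow_succ, pow_two]
    _ = 1 := pb3

lemma hz_eq : pz = pb⁻¹ * pa⁻¹ := by
  calc pz = (pa * pb)⁻¹ * (pa * pb * pz) := by group
    _ = (pa * pb)⁻¹ * 1 := by rw [habz]
    _ = pb⁻¹ * pa⁻¹ := by group

lemma hs : pa * pb * pa * pb * pa * pb = 1 := by
  have h3 : pz * pz * pz = 1 := by
    calc pz * pz * pz = pz ^ 3 := by rw [pow_succ, pow_two]
      _ = 1 := pz3
  calc pa * pb * pa * pb * pa * pb = ((pz * pz * pz)⁻¹ : P) := by rw [hz_eq]; group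
    _ = 1 := by rw [h3]; group

def t1 : P := pb * pa * pa
def t2 : P := pa * pb * pa

lemma t1_def : t1 = pb * pa * pa := rfl
lemma t2_def : t2 = pa * pb * pa := rfl

lemma Ftt : t1 * t2 = pb * pb * pa := by
  calc t1 * t2 = pb * (pa * pa * pa) * (pb * pa) := by rw [t1_def, t2_def]; group
    _ = pb * 1 * (pb * pa) := by rw [haa]
    _ = pb * pb * pa := by group

lemma Ftt' : t2 * t1 = pb * pb * pa := by
  calc t2 * t1 = (pa * pb * pa * pb * pa * pb) * ((pb * pb * pb)⁻¹ * (pb * pb * pa)) := by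
        rw [t2_def, t1_def]; group
    _ = 1 * ((1 : P)⁻¹ * (pb * pb * pa)) := by rw [hs, hbb]
    _ = pb * pb * pa := by group

lemma comm12 : Commute t1 t2 := Ftt.trans Ftt'.symm

lemma hsc1 : SemiconjBy pa t1 t2 := by
  show pa * t1 = t2 * pa
  rw [t1_def, t2_def]; group

lemma hsc2 : SemiconjBy pa t2 ((t1 * t2)⁻¹) := by
  show pa * t2 = (t1 * t2)⁻¹ * pa
  rw [Ftt]
  have h : (pb * pb * pa) * (pa * t2) = pa := by
    calc (pb * pb * pa) * (pa * t2) = pb * pb * (pa * pa * pa) * pb * pa := by rw [t2_def]; group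
      _ = pb * pb * 1 * pb * pa := by rw [haa]
      _ = (pb * pb * pb) * pa := by group
      _ = 1 * pa := by rw [hbb]
      _ = pa := by group
  calc pa * t2 = (pb * pb * pa)⁻¹ * ((pb * pb * pa) * (pa * t2)) := by group
    _ = (pb * pb * pa)⁻¹ * pa := by rw [h]

def Tw (v : ℤ × ℤ) : P := t1 ^ v.1 * t2 ^ v.2

lemma Tw_add (v w : ℤ × ℤ) : Tw (v + w) = Tw v * Tw w := by
  have hc : t2 ^ v.2 * t1 ^ w.1 = t1 ^ w.1 * t2 ^ v.2 := ((comm12.symm).zpow_zpow v.2 w.1).eq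
  show t1 ^ (v + w).1 * t2 ^ (v + w).2 = (t1 ^ v.1 * t2 ^ v.2) * (t1 ^ w.1 * t2 ^ w.2)
  rw [Prod.fst_add, Prod.snd_add, zpow_add, zpow_add]
  calc t1 ^ v.1 * t1 ^ w.1 * (t2 ^ v.2 * t2 ^ w.2)
      = t1 ^ v.1 * (t1 ^ w.1 * t2 ^ v.2) * t2 ^ w.2 := by group
    _ = t1 ^ v.1 * (t2 ^ v.2 * t1 ^ w.1) * t2 ^ w.2 := by rw [← hc]
    _ = _ := by group

lemma a_Tw (v : ℤ × ℤ) : pa * Tw v = Tw (rot 1 v) * pa := by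
  have h1 : pa * t1 ^ v.1 = t2 ^ v.1 * pa := (hsc1.zpow_right v.1).eq
  have h2 : pa * t2 ^ v.2 = ((t1 * t2)⁻¹) ^ v.2 * pa := (hsc2.zpow_right v.2).eq
  have h3 : ((t1 * t2)⁻¹) ^ v.2 = t1 ^ (-v.2) * t2 ^ (-v.2) := by
    rw [inv_zpow, ← zpow_neg, comm12.mul_zpow]
  have h4 : Commute (t2 ^ v.1) (t1 ^ (-v.2)) := (comm12.symm).zpow_zpow _ _
  show pa * (t1 ^ v.1 * t2 ^ v.2) = Tw (rot 1 v) * pa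
  rw [rot_one]
  show pa * (t1 ^ v.1 * t2 ^ v.2) = (t1 ^ (-v.2) * t2 ^ (v.1 - v.2)) * pa
  calc pa * (t1 ^ v.1 * t2 ^ v.2) = (pa * t1 ^ v.1) * t2 ^ v.2 := by group
    _ = t2 ^ v.1 * (pa * t2 ^ v.2) := by rw [h1]; group
    _ = t2 ^ v.1 * (t1 ^ (-v.2) * t2 ^ (-v.2) * pa) := by rw [h2, h3]
    _ = (t2 ^ v.1 * t1 ^ (-v.2)) * t2 ^ (-v.2) * pa := by group
    _ = (t1 ^ (-v.2) * t2 ^ v.1) * t2 ^ (-v.2) * pa := by rw [h4.eq]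
    _ = (t1 ^ (-v.2) * t2 ^ (v.1 - v.2)) * pa := by rw [sub_eq_add_neg, zpow_add]; group

lemma apow_Tw (k : ZMod 3) (v : ℤ × ℤ) : pa ^ k.val * Tw v = Tw (rot k v) * pa ^ k.val := by
  rcases zmod3_cases k with rfl | rfl | rfl
  · simp
  · have h : (1 : ZMod 3).val = 1 := rfl
    rw [h, pow_one, a_Tw]
  · have h : (2 : ZMod 3).val = 2 := rfl
    have h11 : (1 + 1 : ZMod 3) = 2 := rfl
    rw [h]
    calc pa ^ 2 * Tw v = pa * (pa * Tw v) := by rw [pow_two, mul_assoc]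
      _ = pa * (Tw (rot 1 v) * pa) := by rw [a_Tw]
      _ = (pa * Tw (rot 1 v)) * pa := by group
      _ = (Tw (rot 1 (rot 1 v)) * pa) * pa := by rw [a_Tw]
      _ = Tw (rot 2 v) * pa ^ 2 := by rw [rot_rot, h11, pow_two, mul_assoc]

lemma apow_mod (n : ℕ) : pa ^ (n % 3) = pa ^ n := by
  conv_rhs => rw [← Nat.div_add_mod n 3]
  rw [pow_add, pow_mul, pa3, one_pow, one_mul]

def psi : M →* P where
  toFun g := Tw g.v * pa ^ g.k.val
  map_one' := by
    show Tw 0 * pa ^ (0 : ZMod 3).val = 1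
    simp [Tw]
  map_mul' g h := by
    show Tw (g.v + rot g.k h.v) * pa ^ ((g.k + h.k).val)
        = (Tw g.v * pa ^ g.k.val) * (Tw h.v * pa ^ h.k.val)
    rw [Tw_add, ZMod.val_add, apow_mod, pow_add]
    calc Tw g.v * Tw (rot g.k h.v) * (pa ^ g.k.val * pa ^ h.k.val)
        = Tw g.v * ((Tw (rot g.k h.v) * pa ^ g.k.val) * pa ^ h.k.val) := by group
      _ = Tw g.v * ((pa ^ g.k.val * Tw h.v) * pa ^ h.k.val) := by rw [← apow_Tw]
      _ = _ := by group

end VD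

namespace VD

def xM : M := ⟨0, 1⟩
def yM : M := ⟨(1, 0), 1⟩
def zM : M := ⟨(1, 1), 1⟩

lemma cube_M (v : ℤ × ℤ) : (⟨v, 1⟩ : M) ^ 3 = 1 := by
  have h11 : (1 + 1 : ZMod 3) = 2 := rfl
  rw [pow_succ, pow_two]
  ext <;> simp [rot_one, rot_rot, h11, rot_two] <;> ring_nf
  · decide

def fgen : Fin 3 → M := ![xM, yM, zM]

lemma hrels : ∀ r ∈ vonDyckRels 3 3 3, FreeGroup.lift fgen r = 1 := by
  intro r hr
  simp only [vonDyckRels, Set.mem_insert_iff, Set.mem_singleton_iff] at hr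
  rcases hr with rfl | rfl | rfl | rfl
  · rw [map_pow, FreeGroup.lift_apply_of]
    exact cube_M 0
  · rw [map_pow, FreeGroup.lift_apply_of]
    exact cube_M (1, 0)
  · rw [map_pow, FreeGroup.lift_apply_of]
    exact cube_M (1, 1)
  · rw [map_mul, map_mul, FreeGroup.lift_apply_of, FreeGroup.lift_apply_of, FreeGroup.lift_apply_of]
    show xM * yM * zM = 1
    ext <;> simp [xM, yM, zM, rot_one, rot_rot, rot_two] <;> decide

def kP : P →* M := PresentedGroup.toGroup hrels

lemma kP_a : kP pa = xM := PresentedGroup.toGroup.of hrels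
lemma kP_b : kP pb = yM := PresentedGroup.toGroup.of hrels

lemma kP_t1 : kP t1 = ⟨(1, 0), 0⟩ := by
  rw [t1_def, map_mul, map_mul, kP_a, kP_b]
  ext <;> simp [xM, yM, rot_one, rot_two, rot_rot] <;> decide

lemma kP_t2 : kP t2 = ⟨(0, 1), 0⟩ := by
  rw [t2_def, map_mul, map_mul, kP_a, kP_b]
  ext <;> simp [xM, yM, rot_one, rot_two, rot_rot] <;> decide

lemma t1_pa : t1 * pa = pb := by
  calc t1 * pa = pb * (pa * pa * pa) := by rw [t1_def]; group
    _ = pb := by rw [haa]; group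

lemma t1_t2_pa : t1 * t2 * pa = pz := by
  rw [hz_eq]
  calc t1 * t2 * pa = (pb * pb * pa) * pa := by rw [Ftt]
    _ = pb⁻¹ * (pb * pb * pb) * (pa⁻¹ * (pa * pa * pa)) := by group
    _ = pb⁻¹ * 1 * (pa⁻¹ * 1) := by rw [haa, hbb]
    _ = pb⁻¹ * pa⁻¹ := by group

lemma psi_xM : psi xM = pa := by
  show Tw 0 * pa ^ (1 : ZMod 3).val = pa
  have h : (1 : ZMod 3).val = 1 := rfl
  simp [Tw, h]

lemma psi_kP : ∀ g : P, psi (kP g) = g := by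
  have key : psi.comp kP = MonoidHom.id P := by
    refine PresentedGroup.ext fun i => ?_
    fin_cases i
    · show psi (kP pa) = pa
      rw [kP_a, psi_xM]
    · show psi (kP pb) = pb
      rw [kP_b]
      show Tw (1, 0) * pa ^ (1 : ZMod 3).val = pb
      have h : (1 : ZMod 3).val = 1 := rfl
      rw [h, pow_one]
      show t1 ^ (1 : ℤ) * t2 ^ (0 : ℤ) * pa = pb
      rw [zpow_one, zpow_zero, mul_one, t1_pa]
    · show psi (kP pz) = pz
      have hkz : kP pz = zM := PresentedGroup.toGroup.of hrels
      rw [hkz]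
      show Tw (1, 1) * pa ^ (1 : ZMod 3).val = pz
      have h : (1 : ZMod 3).val = 1 := rfl
      rw [h, pow_one]
      show t1 ^ (1 : ℤ) * t2 ^ (1 : ℤ) * pa = pz
      rw [zpow_one, zpow_one, t1_t2_pa]
  intro g
  have := DFunLike.congr_fun key g
  simpa using this

lemma kP_psi : ∀ m : M, kP (psi m) = m := by
  intro m
  show kP (Tw m.v * pa ^ m.k.val) = m
  have hTw : ∀ v : ℤ × ℤ, kP (Tw v) = ⟨v, 0⟩ := by
    intro v
    show kP (t1 ^ v.1 * t2 ^ v.2) = _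
    rw [map_mul, map_zpow, map_zpow, kP_t1, kP_t2, T_zpow, T_zpow]
    ext <;> simp
  rw [map_mul, map_pow, hTw, kP_a]
  have hX : xM ^ m.k.val = ⟨0, (m.k.val : ZMod 3)⟩ := X_pow m.k.val
  rw [hX]
  ext <;> simp [ZMod.natCast_val, ZMod.cast_id]

def eqv : P ≃* M :=
  { toFun := kP, invFun := psi, left_inv := psi_kP, right_inv := kP_psi,
    map_mul' := map_mul kP }

lemma propertyA_transfer {G H : Type*} [Group G] [Group H] (e : G ≃* H)
    (hG : HasPropertyA G) : HasPropertyA H := by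
  intro φ hc
  have hconj : ∀ g : G, IsConj g (((e.trans φ).trans e.symm) g) := by
    intro g
    have h2 := e.symm.toMonoidHom.map_isConj (hc (e g))
    simpa using h2
  obtain ⟨h, hh⟩ := hG ((e.trans φ).trans e.symm) hconj
  refine ⟨e h, fun x => ?_⟩
  have hx := hh (e.symm x)
  have hx' : e.symm (φ x) = h * e.symm x * h⁻¹ := by simpa using hx
  calc φ x = e (e.symm (φ x)) := by simp
    _ = e (h * e.symm x * h⁻¹) := by rw [hx']
    _ = e h * x * (e h)⁻¹ := by simp [map_mul]

end VD

theorem vonDyck_333_propertyA : HasPropertyA (PresentedGroup (vonDyckRels 3 3 3)) := by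
  exact VD.propertyA_transfer VD.eqv.symm VD.propertyA_M
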